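/- Let (Ω, ℱ, P) be a probability space, let f : ℝ^d → ℝ be differentiable and L-smooth with L > 0, and suppose f satisfies the PL condition with parameter μ > 0 and value f*, i.e. ‖∇f(x)‖² ≥ 2μ(f(x) − f*) ≥ 0 for all x ∈ ℝ^d. Let p ∈ (0, 1], b' > 0, and let η > 0 satisfy μη ≤ p/2 and 1/(2η) − L/2 − ((1 − p) η L²)/(p b') ≥ 0. Let x⁰ ∈ ℝ^d and let x_t, g_t : Ω → ℝ^d (t = 0, 1, 2, …) be measurable with x_0 = x⁰, g_0 = ∇f(x⁰) almost surely, x_{t+1} = x_t − η g_t almost surely, and suppose f ∘ x_t, ‖g_t − ∇f(x_t)‖² and ‖x_{t+1} − x_t‖² are integrable for every t. Assume that for every t ≥ 0 the estimator recursion E‖g_{t+1} − ∇f(x_{t+1})‖² ≤ ((1 − p) L²/b') · E‖x_{t+1} − x_t‖² + (1 − p) · E‖g_t − ∇f(x_t)‖² holds. Then for every integer T ≥ 0, E[f(x_T)] − f* ≤ (1 − μη)^T (f(x⁰) − f*). -/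

import Mathlib

open MeasureTheory
open scoped BigOperators RealInnerProductSpace

section aux
open intervalIntegral

lemma descent_lemma {F : Type*} [NormedAddCommGroup F] [InnerProductSpace ℝ F] [CompleteSpace F]
    (f : F → ℝ) (L : ℝ) (hL : 0 ≤ L) (hf : Differentiable ℝ f)
    (hsm : ∀ x y : F, ‖gradient f x - gradient f y‖ ≤ L * ‖x - y‖) (x y : F) :
    f y ≤ f x + ⟪gradient f x, y - x⟫ + L / 2 * ‖y - x‖ ^ 2 := by
  set v := y - x with hv
  have hcont : Continuous (gradient f) := by
    have : LipschitzWith L.toNNReal (gradient f) := by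
      apply LipschitzWith.of_dist_le_mul
      intro a b
      rw [dist_eq_norm, dist_eq_norm, Real.coe_toNNReal L hL]
      exact hsm a b
    exact this.continuous
  set φ' : ℝ → ℝ := fun t => ⟪gradient f (x + t • v), v⟫ with hφ'
  have hcontφ : Continuous φ' := by
    apply Continuous.inner
    · exact hcont.comp (by continuity)
    · exact continuous_const
  have hderiv : ∀ t : ℝ, HasDerivAt (fun s : ℝ => f (x + s • v)) (φ' t) t := by
    intro t
    have hc : HasDerivAt (fun s : ℝ => x + s • v) v t := by
      simpa using ((hasDerivAt_id t).smul_const v).const_add x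
    have hfd : HasFDerivAt f (InnerProductSpace.toDual ℝ F (gradient f (x + t • v))) (x + t • v) :=
      (hf (x + t • v)).hasGradientAt.hasFDerivAt
    have := hfd.comp_hasDerivAt t hc
    simpa [φ', InnerProductSpace.toDual_apply_apply, Function.comp_def] using this
  have hftc : ∫ t in (0:ℝ)..1, φ' t = f y - f x := by
    have := integral_eq_sub_of_hasDerivAt (fun t _ => hderiv t)
      (hcontφ.intervalIntegrable 0 1)
    simpa [hv] using this
  have hbound : ∫ t in (0:ℝ)..1, φ' t ≤ ∫ t in (0:ℝ)..1, (⟪gradient f x, v⟫ + L * t * ‖v‖ ^ 2) := by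
    apply integral_mono_on (by norm_num) (hcontφ.intervalIntegrable 0 1)
      ((by continuity : Continuous fun t : ℝ => (⟪gradient f x, v⟫ + L * t * ‖v‖ ^ 2)).intervalIntegrable 0 1)
    intro t ht
    rcases Set.mem_Icc.mp ht with ⟨ht0, ht1⟩
    have h1 : φ' t - ⟪gradient f x, v⟫ = ⟪gradient f (x + t • v) - gradient f x, v⟫ := by
      rw [inner_sub_left]
    have h2 : ⟪gradient f (x + t • v) - gradient f x, v⟫ ≤ L * t * ‖v‖ ^ 2 := by
      calc ⟪gradient f (x + t • v) - gradient f x, v⟫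
          ≤ ‖gradient f (x + t • v) - gradient f x‖ * ‖v‖ := real_inner_le_norm _ _
        _ ≤ (L * ‖(x + t • v) - x‖) * ‖v‖ := by
            apply mul_le_mul_of_nonneg_right (hsm _ _) (norm_nonneg _)
        _ = L * t * ‖v‖ ^ 2 := by
            rw [add_sub_cancel_left, norm_smul, Real.norm_eq_abs, abs_of_nonneg ht0]; ring
    linarith
  have hrhs : ∫ t in (0:ℝ)..1, (⟪gradient f x, v⟫ + L * t * ‖v‖ ^ 2)
      = ⟪gradient f x, v⟫ + L / 2 * ‖v‖ ^ 2 := by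
    rw [integral_add (intervalIntegrable_const)
      ((by continuity : Continuous fun t : ℝ => L * t * ‖v‖ ^ 2).intervalIntegrable 0 1)]
    simp only [intervalIntegral.integral_const, smul_eq_mul]
    have : ∫ t in (0:ℝ)..1, L * t * ‖v‖ ^ 2 = L / 2 * ‖v‖ ^ 2 := by
      have : (fun t : ℝ => L * t * ‖v‖ ^ 2) = fun t : ℝ => (L * ‖v‖ ^ 2) * t := by ext t; ring
      rw [this, intervalIntegral.integral_const_mul, integral_id]
      ring
    rw [this]; norm_num
  rw [hrhs] at hbound
  rw [hftc] at hbound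
  linarith

lemma lyapunov_rec (μ η p L b' fstar A0v : ℝ) (hp0 : 0 < p) (hp1 : p ≤ 1)
    (hη0 : 0 < η) (hη1 : μ * η ≤ p / 2)
    (hη2 : 1 / (2 * η) - L / 2 - ((1 - p) * η * L ^ 2) / (p * b') ≥ 0)
    (hb' : 0 < b')
    (A D X : ℕ → ℝ) (hDnn : ∀ t, 0 ≤ D t) (hXnn : ∀ t, 0 ≤ X t)
    (hA0 : A 0 = A0v) (hD0 : D 0 = 0)
    (step1 : ∀ t, A (t + 1) ≤ A t - μ * η * (A t - fstar) + (η / 2) * D t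
      - (1 / (2 * η) - L / 2) * X t)
    (step2 : ∀ t, D (t + 1) ≤ ((1 - p) * L ^ 2 / b') * X t + (1 - p) * D t) :
    ∀ T : ℕ, A T - fstar ≤ (1 - μ * η) ^ T * (A0v - fstar) := by
  have hηp : 0 < η / p := div_pos hη0 hp0
  have h1mη : 0 ≤ 1 - μ * η := by linarith
  have key : ∀ t, A (t + 1) - fstar + (η / p) * D (t + 1)
      ≤ (1 - μ * η) * (A t - fstar + (η / p) * D t) := by
    intro t
    have hd := mul_le_mul_of_nonneg_left (step2 t) hηp.le
    have hXcoef : (η / p) * ((1 - p) * L ^ 2 / b') ≤ 1 / (2 * η) - L / 2 := by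
      have heq : (η / p) * ((1 - p) * L ^ 2 / b') = ((1 - p) * η * L ^ 2) / (p * b') := by
        field_simp
      rw [heq]; linarith
    have hDcoef : η / 2 + (η / p) * (1 - p) ≤ (1 - μ * η) * (η / p) := by
      have heq : (1 - μ * η) * (η / p)
          = η / 2 + (η / p) * (1 - p) + (η / p) * (p / 2 - μ * η) := by
        field_simp; ring
      have h : 0 ≤ (η / p) * (p / 2 - μ * η) := mul_nonneg hηp.le (by linarith)
      linarith
    have hx := mul_le_mul_of_nonneg_right hXcoef (hXnn t)
    have hdc := mul_le_mul_of_nonneg_right hDcoef (hDnn t)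
    nlinarith [step1 t, hd, hx, hdc]
  have hΦ : ∀ T : ℕ, A T - fstar + (η / p) * D T ≤ (1 - μ * η) ^ T * (A0v - fstar) := by
    intro T
    induction T with
    | zero => rw [hA0, hD0]; simp
    | succ n ih =>
      calc A (n + 1) - fstar + (η / p) * D (n + 1)
          ≤ (1 - μ * η) * (A n - fstar + (η / p) * D n) := key n
        _ ≤ (1 - μ * η) * ((1 - μ * η) ^ n * (A0v - fstar)) :=
            mul_le_mul_of_nonneg_left ih h1mη
        _ = (1 - μ * η) ^ (n + 1) * (A0v - fstar) := by ring
  intro T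
  have := mul_nonneg hηp.le (hDnn T)
  linarith [hΦ T]

end aux

theorem stmt_12 {Ω : Type*} [MeasurableSpace Ω] (P : Measure Ω) [IsProbabilityMeasure P]
    (d : ℕ) (f : EuclideanSpace ℝ (Fin d) → ℝ) (L : ℝ) (hL : 0 < L)
    (hf : Differentiable ℝ f)
    (hsmooth : ∀ x y : EuclideanSpace ℝ (Fin d),
      ‖gradient f x - gradient f y‖ ≤ L * ‖x - y‖)
    (μ fstar : ℝ) (hμ : 0 < μ)
    (hpl : ∀ x : EuclideanSpace ℝ (Fin d), ‖gradient f x‖ ^ 2 ≥ 2 * μ * (f x - fstar))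
    (hpl0 : ∀ x : EuclideanSpace ℝ (Fin d), 2 * μ * (f x - fstar) ≥ 0)
    (p : ℝ) (hp0 : 0 < p) (hp1 : p ≤ 1) (b' : ℝ) (hb' : 0 < b')
    (η : ℝ) (hη0 : 0 < η) (hη1 : μ * η ≤ p / 2)
    (hη2 : 1 / (2 * η) - L / 2 - ((1 - p) * η * L ^ 2) / (p * b') ≥ 0)
    (x0 : EuclideanSpace ℝ (Fin d))
    (x g : ℕ → Ω → EuclideanSpace ℝ (Fin d))
    (hxm : ∀ t, Measurable (x t)) (hgm : ∀ t, Measurable (g t))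
    (hx0 : ∀ᵐ ω ∂P, x 0 ω = x0)
    (hg0 : ∀ᵐ ω ∂P, g 0 ω = gradient f x0)
    (hupd : ∀ t, ∀ᵐ ω ∂P, x (t + 1) ω = x t ω - η • g t ω)
    (hint1 : ∀ t, Integrable (fun ω => f (x t ω)) P)
    (hint3 : ∀ t, Integrable (fun ω => ‖g t ω - gradient f (x t ω)‖ ^ 2) P)
    (hint4 : ∀ t, Integrable (fun ω => ‖x (t + 1) ω - x t ω‖ ^ 2) P)
    (hrec : ∀ t, ∫ ω, ‖g (t + 1) ω - gradient f (x (t + 1) ω)‖ ^ 2 ∂P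
        ≤ ((1 - p) * L ^ 2 / b') * ∫ ω, ‖x (t + 1) ω - x t ω‖ ^ 2 ∂P
          + (1 - p) * ∫ ω, ‖g t ω - gradient f (x t ω)‖ ^ 2 ∂P) :
    ∀ T : ℕ, (∫ ω, f (x T ω) ∂P) - fstar ≤ (1 - μ * η) ^ T * (f x0 - fstar) := by
  set C : ℝ := 1 / (2 * η) - L / 2 with hCdef
  -- step 1: descent + PL, integrated
  have step1 : ∀ t, ∫ ω, f (x (t + 1) ω) ∂P
      ≤ (∫ ω, f (x t ω) ∂P) - μ * η * ((∫ ω, f (x t ω) ∂P) - fstar)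
        + (η / 2) * ∫ ω, ‖g t ω - gradient f (x t ω)‖ ^ 2 ∂P
        - C * ∫ ω, ‖x (t + 1) ω - x t ω‖ ^ 2 ∂P := by
    intro t
    have hpt : ∀ᵐ ω ∂P, f (x (t + 1) ω) ≤ f (x t ω) - μ * η * (f (x t ω) - fstar)
        + (η / 2) * ‖g t ω - gradient f (x t ω)‖ ^ 2
        - C * ‖x (t + 1) ω - x t ω‖ ^ 2 := by
      filter_upwards [hupd t] with ω hω
      set a := x t ω
      set b := g t ω
      have hd := descent_lemma f L hL.le hf hsmooth a (a - η • b)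
      have hyx : (a - η • b) - a = -(η • b) := by abel
      have h1 : ⟪gradient f a, (a - η • b) - a⟫ = -(η * ⟪gradient f a, b⟫) := by
        rw [hyx, inner_neg_right, real_inner_smul_right]
      have h2 : ‖(a - η • b) - a‖ ^ 2 = η ^ 2 * ‖b‖ ^ 2 := by
        rw [hyx, norm_neg, norm_smul, Real.norm_eq_abs, abs_of_pos hη0, mul_pow]
      have h3 : ‖b - gradient f a‖ ^ 2
          = ‖b‖ ^ 2 - 2 * ⟪gradient f a, b⟫ + ‖gradient f a‖ ^ 2 := by
        rw [norm_sub_sq_real, real_inner_comm]; try ring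
      have h4 := hpl a
      rw [h1, h2] at hd
      rw [hω, h3]
      have h2' : ‖a - η • b - a‖ ^ 2 = η ^ 2 * ‖b‖ ^ 2 := h2
      rw [h2']
      have hC2 : C * (η ^ 2 * ‖b‖ ^ 2) = (η / 2 - L * η ^ 2 / 2) * ‖b‖ ^ 2 := by
        rw [hCdef]; field_simp; try ring
      have hplmul := mul_le_mul_of_nonneg_left h4 (by linarith : (0:ℝ) ≤ η / 2)
      nlinarith [hd, hplmul, hC2]
    have i2 : Integrable (fun ω => μ * η * (f (x t ω) - fstar)) P :=
      ((hint1 t).sub (integrable_const fstar)).const_mul (μ * η)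
    have i3 : Integrable (fun ω => (η / 2) * ‖g t ω - gradient f (x t ω)‖ ^ 2) P :=
      (hint3 t).const_mul (η / 2)
    have i4 : Integrable (fun ω => C * ‖x (t + 1) ω - x t ω‖ ^ 2) P :=
      (hint4 t).const_mul C
    have hInt : Integrable (fun ω => f (x t ω) - μ * η * (f (x t ω) - fstar)
        + (η / 2) * ‖g t ω - gradient f (x t ω)‖ ^ 2
        - C * ‖x (t + 1) ω - x t ω‖ ^ 2) P :=
      (((hint1 t).sub i2).add i3).sub i4
    have hmono := integral_mono_ae (hint1 (t + 1)) hInt hpt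
    calc ∫ ω, f (x (t + 1) ω) ∂P
        ≤ ∫ ω, (f (x t ω) - μ * η * (f (x t ω) - fstar)
            + (η / 2) * ‖g t ω - gradient f (x t ω)‖ ^ 2
            - C * ‖x (t + 1) ω - x t ω‖ ^ 2) ∂P := hmono
      _ = (∫ ω, f (x t ω) ∂P) - μ * η * ((∫ ω, f (x t ω) ∂P) - fstar)
          + (η / 2) * ∫ ω, ‖g t ω - gradient f (x t ω)‖ ^ 2 ∂P
          - C * ∫ ω, ‖x (t + 1) ω - x t ω‖ ^ 2 ∂P := by
          have i12 : Integrable (fun ω => f (x t ω) - μ * η * (f (x t ω) - fstar)) P :=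
            (hint1 t).sub i2
          have i123 : Integrable (fun ω => f (x t ω) - μ * η * (f (x t ω) - fstar)
              + (η / 2) * ‖g t ω - gradient f (x t ω)‖ ^ 2) P := i12.add i3
          rw [integral_sub i123 i4, integral_add i12 i3, integral_sub (hint1 t) i2,
            integral_const_mul, integral_const_mul, integral_const_mul,
            integral_sub (hint1 t) (integrable_const fstar), integral_const]
          simp [measure_univ]
  have hDnn : ∀ t, 0 ≤ ∫ ω, ‖g t ω - gradient f (x t ω)‖ ^ 2 ∂P := fun t =>
    integral_nonneg fun ω => by positivity
  have hXnn : ∀ t, 0 ≤ ∫ ω, ‖x (t + 1) ω - x t ω‖ ^ 2 ∂P := fun t =>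
    integral_nonneg fun ω => by positivity
  have hA0 : ∫ ω, f (x 0 ω) ∂P = f x0 := by
    have : (fun ω => f (x 0 ω)) =ᵐ[P] fun _ => f x0 := hx0.mono fun ω h => by simp [h]
    rw [integral_congr_ae this, integral_const]
    simp [measure_univ]
  have hD0 : ∫ ω, ‖g 0 ω - gradient f (x 0 ω)‖ ^ 2 ∂P = 0 := by
    have : (fun ω => ‖g 0 ω - gradient f (x 0 ω)‖ ^ 2) =ᵐ[P] fun _ => (0:ℝ) := by
      filter_upwards [hx0, hg0] with ω h1 h2
      rw [h1, h2]; simp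
    rw [integral_congr_ae this, integral_zero]
  exact lyapunov_rec μ η p L b' fstar (f x0) hp0 hp1 hη0 hη1 hη2 hb'
    (fun t => ∫ ω, f (x t ω) ∂P)
    (fun t => ∫ ω, ‖g t ω - gradient f (x t ω)‖ ^ 2 ∂P)
    (fun t => ∫ ω, ‖x (t + 1) ω - x t ω‖ ^ 2 ∂P)
    hDnn hXnn hA0 hD0 step1 hrec
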